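/- Let F = {f_0,…,f_{N−1}} be a finite family of homeomorphisms of the circle 𝕊¹ (with metric d) and μ a probability measure on I = {0,…,N−1} with weights p_0,…,p_{N−1}. Suppose there exist α ∈ (0,1), λ ∈ (0,1), c > 0 such that sup_{x≠y} ∫ d(X_n^x(i), X_n^y(i))^α / d(x,y)^α dμ^ℕ(i) ≤ c·λ^n for all n ∈ ℕ, and there exists L ≥ 1 with L^{−1} d(x,y) ≤ d(f_j(x), f_j(y)) ≤ L d(x,y) for all j ∈ I and x,y ∈ 𝕊¹. Define (Qφ)(j,x) := Σ_{i∈I} p_i φ(i, f_j(x)) and the Hölder seminorm |φ|_α := sup_{j∈I, x≠y} |φ(j,x) − φ(j,y)| / d(x,y)^α. Then there exists C > 0 such that for every bounded measurable φ : I × 𝕊¹ → ℝ and every n ∈ ℕ: |Q^n φ|_α ≤ C·λ^n·|φ|_α. -/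

import Mathlib

open MeasureTheory Topology Filter

noncomputable section

/-- Iteration of the IFS: `ifsIter f i n = f (i (n-1)) ∘ ⋯ ∘ f (i 0)`, i.e. `f_i^n`. -/
def ifsIter {α : Type*} {N : ℕ} (f : Fin N → α → α) (i : ℕ → Fin N) : ℕ → α → α
  | 0, x => x
  | n + 1, x => f (i n) (ifsIter f i n x)

/-- `P` is the Bernoulli product measure `μ^ℕ` on `ℕ → Fin N` with weights `p`. -/
def IsBernoulli {N : ℕ} (p : Fin N → ℝ) (P : Measure (ℕ → Fin N)) : Prop :=
  IsProbabilityMeasure P ∧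
    ∀ (n : ℕ) (w : Fin n → Fin N),
      P {i | ∀ k : Fin n, i (k : ℕ) = w k} = ∏ k : Fin n, ENNReal.ofReal (p (w k))

/-- Hypothesis (H): there is no probability measure invariant under every map of the IFS. -/
def HypH {N : ℕ} (f : Fin N → UnitAddCircle → UnitAddCircle) : Prop :=
  ¬ ∃ m : Measure UnitAddCircle, IsProbabilityMeasure m ∧
      ∀ j : Fin N, Measure.map (f j) m = m

/-- Property (P): proximality. -/
def HypP {N : ℕ} (f : Fin N → UnitAddCircle → UnitAddCircle) : Prop :=
  ∀ x y : UnitAddCircle, ∃ i : ℕ → Fin N, ∃ φ : ℕ → ℕ, StrictMono φ ∧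
    Tendsto (fun k => dist (ifsIter f i (φ k) x) (ifsIter f i (φ k) y)) atTop (𝓝 0)

/-- `ν` is a `μ`-stationary measure for the IFS with probabilities: `ν = Σ_j p_j (f_j)_* ν`. -/
def IFSStationary {N : ℕ} (p : Fin N → ℝ) (f : Fin N → UnitAddCircle → UnitAddCircle)
    (ν : Measure UnitAddCircle) : Prop :=
  ν = ∑ j : Fin N, ENNReal.ofReal (p j) • Measure.map (f j) ν

/-- Hölder continuity of `h`. -/
def IsHolderFn (h : UnitAddCircle → ℝ) : Prop :=
  ∃ H > (0 : ℝ), ∃ β ∈ Set.Ioc (0 : ℝ) 1, ∀ x y, |h x - h y| ≤ H * dist x y ^ β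

/-- `g j` is the modulus of the derivative of `f j`, expressed as a metric derivative. -/
def IsAbsDerivOf {N : ℕ} (f : Fin N → UnitAddCircle → UnitAddCircle)
    (g : Fin N → UnitAddCircle → ℝ) : Prop :=
  ∀ (j : Fin N) (x : UnitAddCircle),
    Tendsto (fun y => dist (f j x) (f j y) / dist x y) (𝓝[≠] x) (𝓝 (g j x))

/-- The Laplace–Markov operator `Q`. -/
def Qop {N : ℕ} (p : Fin N → ℝ) (f : Fin N → UnitAddCircle → UnitAddCircle)
    (φ : Fin N × UnitAddCircle → ℝ) : Fin N × UnitAddCircle → ℝ :=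
  fun z => ∑ i : Fin N, p i * φ (i, f z.1 z.2)

namespace Stmt17Aux

variable {N : ℕ}

def compFin (f : Fin N → UnitAddCircle → UnitAddCircle) :
    ∀ n, (Fin n → Fin N) → UnitAddCircle → UnitAddCircle
  | 0, _, x => x
  | n + 1, w, x => compFin f n (fun k => w k.succ) (f (w 0) x)

def Sfun (p : Fin N → ℝ) (f : Fin N → UnitAddCircle → UnitAddCircle) (α : ℝ) :
    ℕ → UnitAddCircle → UnitAddCircle → ℝ
  | 0, u, v => dist u v ^ α
  | n + 1, u, v => ∑ i, p i * Sfun p f α n (f i u) (f i v)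

lemma ifsIter_shift (f : Fin N → UnitAddCircle → UnitAddCircle) (i : ℕ → Fin N) :
    ∀ (n : ℕ) (x : UnitAddCircle),
      ifsIter f i (n + 1) x = ifsIter f (fun k => i (k + 1)) n (f (i 0) x)
  | 0, x => rfl
  | n + 1, x => by
      show f (i (n + 1)) (ifsIter f i (n + 1) x) = _
      rw [ifsIter_shift f i n x]
      rfl

lemma ifsIter_eq_compFin (f : Fin N → UnitAddCircle → UnitAddCircle) :
    ∀ (n : ℕ) (i : ℕ → Fin N) (x : UnitAddCircle),
      ifsIter f i n x = compFin f n (fun k => i k) x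
  | 0, _, _ => rfl
  | n + 1, i, x => by
      rw [ifsIter_shift, ifsIter_eq_compFin f n]
      rfl

lemma compFin_cons (f : Fin N → UnitAddCircle → UnitAddCircle) (n : ℕ)
    (a : Fin N) (w : Fin n → Fin N) (x : UnitAddCircle) :
    compFin f (n + 1) (Fin.cons a w) x = compFin f n w (f a x) := by
  simp only [compFin, Fin.cons_succ, Fin.cons_zero]

lemma Sfun_eq_sum (p : Fin N → ℝ) (f : Fin N → UnitAddCircle → UnitAddCircle) (α : ℝ) :
    ∀ (n : ℕ) (u v : UnitAddCircle),
      Sfun p f α n u v =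
        ∑ w : Fin n → Fin N,
          (∏ k, p (w k)) * dist (compFin f n w u) (compFin f n w v) ^ α
  | 0, u, v => by simp [Sfun, compFin]
  | n + 1, u, v => by
      rw [show Sfun p f α (n+1) u v = ∑ i, p i * Sfun p f α n (f i u) (f i v) from rfl]
      rw [← Equiv.sum_comp (Fin.consEquiv (fun _ => Fin N)), Fintype.sum_prod_type]
      refine Finset.sum_congr rfl fun i _ => ?_
      rw [Sfun_eq_sum p f α n, Finset.mul_sum]
      refine Finset.sum_congr rfl fun w _ => ?_
      have he : (Fin.consEquiv (fun _ => Fin N)) (i, w) = Fin.cons i w := rfl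
      rw [he, compFin_cons, compFin_cons, Fin.prod_univ_succ]
      simp only [Fin.cons_succ, Fin.cons_zero]
      ring

lemma integral_dist_eq (p : Fin N → ℝ) (hp : ∀ j, 0 ≤ p j)
    (f : Fin N → UnitAddCircle → UnitAddCircle) (α : ℝ)
    (P : Measure (ℕ → Fin N)) (hP : IsBernoulli p P)
    (n : ℕ) (u v : UnitAddCircle) :
    ∫ i, dist (ifsIter f i n u) (ifsIter f i n v) ^ α ∂P = Sfun p f α n u v := by
  haveI : IsProbabilityMeasure P := hP.1
  have hπ : Measurable (fun (i : ℕ → Fin N) (k : Fin n) => i (k : ℕ)) :=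
    measurable_pi_lambda _ fun k => measurable_pi_apply _
  set G : (Fin n → Fin N) → ℝ :=
    fun w => dist (compFin f n w u) (compFin f n w v) ^ α with hG
  have hcomp : ∀ i : ℕ → Fin N,
      dist (ifsIter f i n u) (ifsIter f i n v) ^ α = G (fun k => i (k : ℕ)) := by
    intro i
    rw [hG, ifsIter_eq_compFin, ifsIter_eq_compFin]
  simp_rw [hcomp]
  rw [← integral_map hπ.aemeasurable ((measurable_of_countable G).aestronglyMeasurable)]
  haveI : IsProbabilityMeasure (Measure.map (fun (i : ℕ → Fin N) (k : Fin n) => i (k : ℕ)) P) :=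
    Measure.isProbabilityMeasure_map hπ.aemeasurable
  rw [integral_fintype (Integrable.of_finite), Sfun_eq_sum]
  refine Finset.sum_congr rfl fun w _ => ?_
  rw [Measure.real, Measure.map_apply hπ (measurableSet_singleton w)]
  have hpre : (fun (i : ℕ → Fin N) (k : Fin n) => i (k : ℕ)) ⁻¹' {w}
      = {i | ∀ k : Fin n, i (k : ℕ) = w k} := by
    ext i
    simp [funext_iff]
  rw [hpre, hP.2 n w, ENNReal.toReal_prod]
  simp only [smul_eq_mul]
  congr 1
  exact Finset.prod_congr rfl fun k _ => ENNReal.toReal_ofReal (hp _)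

end Stmt17Aux

theorem stmt17 {N : ℕ} (f : Fin N → (UnitAddCircle ≃ₜ UnitAddCircle))
    (p : Fin N → ℝ) (hp : ∀ j, 0 ≤ p j) (hpsum : ∑ j, p j = 1)
    (P : Measure (ℕ → Fin N)) (hP : IsBernoulli p P)
    (α : ℝ) (hα : α ∈ Set.Ioo (0 : ℝ) 1) (lam : ℝ) (hlam : lam ∈ Set.Ioo (0 : ℝ) 1)
    (c : ℝ) (hc : 0 < c)
    (hdecay : ∀ (n : ℕ) (x y : UnitAddCircle), x ≠ y →
      (∫ i, (dist (ifsIter (fun j => ⇑(f j)) i n x) (ifsIter (fun j => ⇑(f j)) i n y)) ^ α /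
          (dist x y) ^ α ∂P) ≤ c * lam ^ n)
    (L : ℝ) (hL : 1 ≤ L)
    (hLip : ∀ (j : Fin N) (x y : UnitAddCircle),
      L⁻¹ * dist x y ≤ dist (f j x) (f j y) ∧ dist (f j x) (f j y) ≤ L * dist x y) :
    ∃ C > (0 : ℝ), ∀ φ : Fin N × UnitAddCircle → ℝ, Measurable φ →
      (∃ Cb : ℝ, ∀ z, |φ z| ≤ Cb) →
      ∀ K : ℝ, (∀ (j : Fin N) (x y : UnitAddCircle),
          |φ (j, x) - φ (j, y)| ≤ K * dist x y ^ α) →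
        ∀ (n : ℕ) (j : Fin N) (x y : UnitAddCircle),
          |(Qop p (fun j => ⇑(f j)))^[n] φ (j, x) - (Qop p (fun j => ⇑(f j)))^[n] φ (j, y)|
            ≤ C * lam ^ n * K * dist x y ^ α := by
  classical
  set f0 : Fin N → UnitAddCircle → UnitAddCircle := fun j => ⇑(f j) with hf0
  set C : ℝ := max 1 (c * L / lam) with hC
  have hC1 : (1 : ℝ) ≤ C := le_max_left _ _
  have hCpos : (0 : ℝ) < C := lt_of_lt_of_le one_pos hC1
  have hlam0 : (0 : ℝ) < lam := hlam.1
  -- Sfun decay bound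
  have hSdecay : ∀ (n : ℕ) (u v : UnitAddCircle), u ≠ v →
      Stmt17Aux.Sfun p f0 α n u v ≤ c * lam ^ n * dist u v ^ α := by
    intro n u v huv
    have hd : (0 : ℝ) < dist u v ^ α := Real.rpow_pos_of_pos (dist_pos.2 huv) α
    have h1 := hdecay n u v huv
    rw [integral_div, Stmt17Aux.integral_dist_eq p hp f0 α P hP] at h1
    calc Stmt17Aux.Sfun p f0 α n u v
        = (Stmt17Aux.Sfun p f0 α n u v / dist u v ^ α) * dist u v ^ α := by
          field_simp
      _ ≤ (c * lam ^ n) * dist u v ^ α := mul_le_mul_of_nonneg_right h1 hd.le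
  refine ⟨C, hCpos, ?_⟩
  intro φ hφm hφb K hφK n j x y
  -- key induction
  have key : ∀ (m : ℕ) (j : Fin N) (x y : UnitAddCircle),
      |(Qop p f0)^[m + 1] φ (j, x) - (Qop p f0)^[m + 1] φ (j, y)| ≤
        K * Stmt17Aux.Sfun p f0 α m (f0 j x) (f0 j y) := by
    intro m
    induction m with
    | zero =>
      intro j x y
      show |∑ i, p i * φ (i, f0 j x) - ∑ i, p i * φ (i, f0 j y)| ≤ _
      rw [← Finset.sum_sub_distrib]
      calc |∑ i, (p i * φ (i, f0 j x) - p i * φ (i, f0 j y))|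
          ≤ ∑ i, |p i * φ (i, f0 j x) - p i * φ (i, f0 j y)| :=
            Finset.abs_sum_le_sum_abs _ _
        _ ≤ ∑ i, p i * (K * dist (f0 j x) (f0 j y) ^ α) := by
            refine Finset.sum_le_sum fun i _ => ?_
            rw [← mul_sub, abs_mul, abs_of_nonneg (hp i)]
            exact mul_le_mul_of_nonneg_left (hφK i _ _) (hp i)
        _ = K * Stmt17Aux.Sfun p f0 α 0 (f0 j x) (f0 j y) := by
            rw [← Finset.sum_mul, hpsum, one_mul]; rfl
    | succ m ih =>
      intro j x y
      rw [Function.iterate_succ_apply' (Qop p f0) (m + 1) φ]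
      show |∑ i, p i * (Qop p f0)^[m + 1] φ (i, f0 j x)
          - ∑ i, p i * (Qop p f0)^[m + 1] φ (i, f0 j y)| ≤ _
      rw [← Finset.sum_sub_distrib]
      calc |∑ i, (p i * (Qop p f0)^[m + 1] φ (i, f0 j x)
              - p i * (Qop p f0)^[m + 1] φ (i, f0 j y))|
          ≤ ∑ i, |p i * (Qop p f0)^[m + 1] φ (i, f0 j x)
              - p i * (Qop p f0)^[m + 1] φ (i, f0 j y)| :=
            Finset.abs_sum_le_sum_abs _ _
        _ ≤ ∑ i, p i * (K * Stmt17Aux.Sfun p f0 α m (f0 i (f0 j x)) (f0 i (f0 j y))) := by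
            refine Finset.sum_le_sum fun i _ => ?_
            rw [← mul_sub, abs_mul, abs_of_nonneg (hp i)]
            exact mul_le_mul_of_nonneg_left (ih i _ _) (hp i)
        _ = K * Stmt17Aux.Sfun p f0 α (m + 1) (f0 j x) (f0 j y) := by
            rw [show Stmt17Aux.Sfun p f0 α (m + 1) (f0 j x) (f0 j y)
                = ∑ i, p i * Stmt17Aux.Sfun p f0 α m (f0 i (f0 j x)) (f0 i (f0 j y)) from rfl,
              Finset.mul_sum]
            exact Finset.sum_congr rfl fun i _ => by ring
  by_cases hxy : x = y
  · subst hxy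
    simp [Real.zero_rpow (ne_of_gt hα.1)]
  · have hd : (0 : ℝ) < dist x y ^ α := Real.rpow_pos_of_pos (dist_pos.2 hxy) α
    have hKd : (0 : ℝ) ≤ K * dist x y ^ α := le_trans (abs_nonneg _) (hφK j x y)
    have hK0 : (0 : ℝ) ≤ K := by nlinarith
    match n with
    | 0 =>
      simp only [Function.iterate_zero, id_eq, pow_zero]
      calc |φ (j, x) - φ (j, y)| ≤ K * dist x y ^ α := hφK j x y
        _ = 1 * (K * dist x y ^ α) := by ring
        _ ≤ C * (K * dist x y ^ α) := mul_le_mul_of_nonneg_right hC1 hKd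
        _ = C * 1 * K * dist x y ^ α := by ring
    | m + 1 =>
      have huv : f0 j x ≠ f0 j y := fun h => hxy ((f j).injective h)
      have hdist : dist (f0 j x) (f0 j y) ^ α ≤ L * dist x y ^ α := by
        calc dist (f0 j x) (f0 j y) ^ α
            ≤ (L * dist x y) ^ α :=
              Real.rpow_le_rpow dist_nonneg (hLip j x y).2 hα.1.le
          _ = L ^ α * dist x y ^ α := Real.mul_rpow (by linarith) dist_nonneg
          _ ≤ L * dist x y ^ α := by
              refine mul_le_mul_of_nonneg_right ?_ (Real.rpow_nonneg dist_nonneg α)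
              calc L ^ α ≤ L ^ (1 : ℝ) :=
                    Real.rpow_le_rpow_of_exponent_le hL hα.2.le
                _ = L := Real.rpow_one L
      have hcL : c * L ≤ C * lam := by
        have := le_max_right 1 (c * L / lam)
        rw [div_le_iff₀ hlam0] at this
        calc c * L ≤ (c * L / lam) * lam := by rw [div_mul_cancel₀]; exact ne_of_gt hlam0
          _ ≤ C * lam := mul_le_mul_of_nonneg_right (le_max_right _ _) hlam0.le
      calc |(Qop p f0)^[m + 1] φ (j, x) - (Qop p f0)^[m + 1] φ (j, y)|
          ≤ K * Stmt17Aux.Sfun p f0 α m (f0 j x) (f0 j y) := key m j x y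
        _ ≤ K * (c * lam ^ m * (L * dist x y ^ α)) := by
            refine mul_le_mul_of_nonneg_left ?_ hK0
            calc Stmt17Aux.Sfun p f0 α m (f0 j x) (f0 j y)
                ≤ c * lam ^ m * dist (f0 j x) (f0 j y) ^ α := hSdecay m _ _ huv
              _ ≤ c * lam ^ m * (L * dist x y ^ α) :=
                  mul_le_mul_of_nonneg_left hdist (by positivity)
        _ = (c * L) * (lam ^ m * (K * dist x y ^ α)) := by ring
        _ ≤ (C * lam) * (lam ^ m * (K * dist x y ^ α)) :=
            mul_le_mul_of_nonneg_right hcL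
              (mul_nonneg (pow_nonneg hlam0.le m) hKd)
        _ = C * lam ^ (m + 1) * K * dist x y ^ α := by ring
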